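/- Let V carry a Hodge structure of weight k polarized by ψ. Then the subgroup K of the general linear group GL(V) consisting of all real-linear automorphisms g of V such that ψ(g v, g w) = ψ(v, w) for all v, w ∈ V and such that the complexification of g maps V^{p,q} into V^{p,q} for every (p,q), is a compact subgroup of GL(V) (with its standard topology). (This is the statement that the isotropy group K = P ∩ G_ℝ of a point of the period domain D is compact, so that D = G_ℝ/K.) -/

import Mathlib

open TensorProduct

instance : RingHomSurjective (starRingEnd ℂ) :=
  ⟨fun x => ⟨star x, star_star x⟩⟩

/-- Conjugation on the complexification `ℂ ⊗[ℝ] V`, `z ⊗ v ↦ z̄ ⊗ v`,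
as a `starRingEnd ℂ`-semilinear map. -/
noncomputable def conjC (V : Type*) [AddCommGroup V] [Module ℝ V] :
    (ℂ ⊗[ℝ] V) →ₛₗ[starRingEnd ℂ] (ℂ ⊗[ℝ] V) where
  toFun := TensorProduct.map Complex.conjAe.toLinearMap LinearMap.id
  map_add' := map_add _
  map_smul' := by
    intro z x
    induction x using TensorProduct.induction_on with
    | zero => simp
    | tmul c v =>
        simp [TensorProduct.smul_tmul', TensorProduct.map_tmul, map_mul]
    | add x y hx hy =>
        simp only [smul_add, map_add]
        exact congrArg₂ (· + ·) hx hy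

/-- The natural inclusion `V → ℂ ⊗[ℝ] V`, `v ↦ 1 ⊗ v`. -/
noncomputable def iotaC (V : Type*) [AddCommGroup V] [Module ℝ V] :
    V →ₗ[ℝ] ℂ ⊗[ℝ] V :=
  TensorProduct.mk ℝ ℂ V 1

section Aux

variable {V : Type*} [AddCommGroup V] [Module ℝ V]

lemma conjC_apply' (x : ℂ ⊗[ℝ] V) :
    conjC V x = TensorProduct.map Complex.conjAe.toLinearMap LinearMap.id x := rfl

lemma conjC_tmul (c : ℂ) (v : V) :
    conjC V (c ⊗ₜ[ℝ] v) = (starRingEnd ℂ c) ⊗ₜ[ℝ] v := by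
  simp [conjC_apply']

lemma iotaC_apply (v : V) : iotaC V v = (1 : ℂ) ⊗ₜ[ℝ] v := rfl

lemma conjC_baseChange (g : V →ₗ[ℝ] V) (x : ℂ ⊗[ℝ] V) :
    conjC V ((g.baseChange ℂ) x) = (g.baseChange ℂ) (conjC V x) := by
  induction x using TensorProduct.induction_on with
  | zero => simp
  | tmul c v => simp [conjC_tmul, LinearMap.baseChange_tmul]
  | add x y hx hy => simp only [map_add, hx, hy]

lemma baseChange_iotaC (g : V →ₗ[ℝ] V) (v : V) :
    (g.baseChange ℂ) (iotaC V v) = iotaC V (g v) := by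
  simp [iotaC_apply, LinearMap.baseChange_tmul]

lemma psic_tmul (ψ : V →ₗ[ℝ] V →ₗ[ℝ] ℝ)
    (ψc : (ℂ ⊗[ℝ] V) →ₗ[ℂ] (ℂ ⊗[ℝ] V) →ₗ[ℂ] ℂ)
    (hExt : ∀ v w : V, ψc (iotaC V v) (iotaC V w) = (ψ v w : ℂ))
    (c d : ℂ) (v w : V) :
    ψc (c ⊗ₜ[ℝ] v) (d ⊗ₜ[ℝ] w) = c * d * (ψ v w : ℂ) := by
  have h1 : (c ⊗ₜ[ℝ] v : ℂ ⊗[ℝ] V) = c • iotaC V v := by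
    simp [iotaC_apply, TensorProduct.smul_tmul']
  have h2 : (d ⊗ₜ[ℝ] w : ℂ ⊗[ℝ] V) = d • iotaC V w := by
    simp [iotaC_apply, TensorProduct.smul_tmul']
  rw [h1, h2]
  simp only [map_smul, LinearMap.smul_apply, LinearMap.map_smul, smul_eq_mul, hExt]
  ring

lemma psic_baseChange (ψ : V →ₗ[ℝ] V →ₗ[ℝ] ℝ)
    (ψc : (ℂ ⊗[ℝ] V) →ₗ[ℂ] (ℂ ⊗[ℝ] V) →ₗ[ℂ] ℂ)
    (hExt : ∀ v w : V, ψc (iotaC V v) (iotaC V w) = (ψ v w : ℂ))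
    (g : V →ₗ[ℝ] V) (hg : ∀ v w : V, ψ (g v) (g w) = ψ v w)
    (x y : ℂ ⊗[ℝ] V) :
    ψc ((g.baseChange ℂ) x) ((g.baseChange ℂ) y) = ψc x y := by
  induction x using TensorProduct.induction_on with
  | zero => simp
  | add a b ha hb => simp only [map_add, LinearMap.add_apply, ha, hb]
  | tmul c v =>
    induction y using TensorProduct.induction_on with
    | zero => simp
    | add a b ha hb => simp only [map_add, ha, hb]
    | tmul d w =>
      rw [LinearMap.baseChange_tmul, LinearMap.baseChange_tmul,
        psic_tmul ψ ψc hExt, psic_tmul ψ ψc hExt, hg]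

end Aux

section AuxNormed

variable {V : Type*} [NormedAddCommGroup V] [NormedSpace ℝ V] [FiniteDimensional ℝ V]

/-- A bilinear form on a finite-dimensional space, bundled as a continuous bilinear map. -/
noncomputable def bilinCLM (B : V →ₗ[ℝ] V →ₗ[ℝ] ℝ) : V →L[ℝ] V →L[ℝ] ℝ :=
  LinearMap.toContinuousLinearMap
    { toFun := fun v => LinearMap.toContinuousLinearMap (B v)
      map_add' := fun x y => by ext z; simp
      map_smul' := fun c x => by ext z; simp }

@[simp] lemma bilinCLM_apply (B : V →ₗ[ℝ] V →ₗ[ℝ] ℝ) (v w : V) :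
    bilinCLM B v w = B v w := by
  simp [bilinCLM]

lemma continuous_bilin (B : V →ₗ[ℝ] V →ₗ[ℝ] ℝ) {X : Type*} [TopologicalSpace X]
    {f g : X → V} (hf : Continuous f) (hg : Continuous g) :
    Continuous fun x => B (f x) (g x) := by
  have h := ((bilinCLM B).continuous.comp hf).clm_apply hg
  simpa using h

lemma bilin_le (B : V →ₗ[ℝ] V →ₗ[ℝ] ℝ) (v w : V) :
    B v w ≤ ‖bilinCLM B‖ * ‖v‖ * ‖w‖ := by
  calc B v w ≤ |B v w| := le_abs_self _
  _ = ‖bilinCLM B v w‖ := by simp [Real.norm_eq_abs]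
  _ ≤ ‖bilinCLM B v‖ * ‖w‖ := (bilinCLM B v).le_opNorm w
  _ ≤ ‖bilinCLM B‖ * ‖v‖ * ‖w‖ :=
      mul_le_mul_of_nonneg_right ((bilinCLM B).le_opNorm v) (norm_nonneg w)

end AuxNormed

set_option maxHeartbeats 1000000 in
set_option synthInstance.maxHeartbeats 200000 in
/-- Let `V` carry a Hodge structure of weight `k` polarized by `ψ`.
Then the subgroup `K` of `GL(V)` of all real-linear automorphisms `g` of `V` preserving
`ψ` and whose complexification maps `V^{p,q}` into `V^{p,q}` for every `(p,q)` is a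
compact subgroup of `GL(V)` in its standard topology (here `V` is given a norm; all
norms on the finite-dimensional space `V` induce the same, standard, topology). -/
theorem stmt11 {V : Type*} [NormedAddCommGroup V] [NormedSpace ℝ V]
    [FiniteDimensional ℝ V]
    (k : ℤ) (H : ℤ → Submodule ℂ (ℂ ⊗[ℝ] V))
    (hInternal : DirectSum.IsInternal H)
    (hFinite : {p : ℤ | H p ≠ ⊥}.Finite)
    (hConj : ∀ p : ℤ, (H p).map (conjC V) = H (k - p))
    (ψ : V →ₗ[ℝ] V →ₗ[ℝ] ℝ)
    (hsymm : ∀ v w : V, ψ w v = (-1 : ℝ) ^ k * ψ v w)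
    (ψc : (ℂ ⊗[ℝ] V) →ₗ[ℂ] (ℂ ⊗[ℝ] V) →ₗ[ℂ] ℂ)
    (hExt : ∀ v w : V, ψc (iotaC V v) (iotaC V w) = (ψ v w : ℂ))
    (hHR1 : ∀ p r : ℤ, r ≠ k - p → ∀ v ∈ H p, ∀ w ∈ H r, ψc v w = 0)
    (hHR2 : ∀ p : ℤ, ∀ v ∈ H p, v ≠ 0 →
        0 < (Complex.I ^ (2 * p - k) * ψc v (conjC V v)).re ∧
          (Complex.I ^ (2 * p - k) * ψc v (conjC V v)).im = 0) :
    IsCompact {g : V →L[ℝ] V | Function.Bijective g ∧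
      (∀ v w : V, ψ (g v) (g w) = ψ v w) ∧
      ∀ p : ℤ, (H p).map (LinearMap.baseChange ℂ (g : V →ₗ[ℝ] V)) ≤ H p} := by
  classical
  rcases subsingleton_or_nontrivial V with hV | hV
  · haveI : Subsingleton (V →L[ℝ] V) :=
      ⟨fun a b => ContinuousLinearMap.ext fun v => Subsingleton.elim _ _⟩
    exact (Set.subsingleton_of_subsingleton).isCompact
  -- projections onto the pieces of the Hodge decomposition
  let e : (DirectSum ℤ fun p => H p) ≃ₗ[ℂ] ℂ ⊗[ℝ] V :=
    LinearEquiv.ofBijective (DirectSum.coeLinearMap H) hInternal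
  have he : ∀ d : DirectSum ℤ fun p => H p, e d = DirectSum.coeLinearMap H d := fun _ => rfl
  let π : ℤ → (ℂ ⊗[ℝ] V) →ₗ[ℂ] ℂ ⊗[ℝ] V := fun p =>
    (H p).subtype ∘ₗ (DirectSum.component ℂ ℤ (fun p => H p) p) ∘ₗ
      (e.symm : (ℂ ⊗[ℝ] V) →ₗ[ℂ] DirectSum ℤ fun p => H p)
  have hπ_def : ∀ (p : ℤ) (x : ℂ ⊗[ℝ] V), π p x = ((e.symm x) p : ℂ ⊗[ℝ] V) :=
    fun _ _ => rfl
  have hπ_mem : ∀ (p : ℤ) (x : ℂ ⊗[ℝ] V), π p x ∈ H p := fun p x => (e.symm x p).2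
  set F : Finset ℤ := hFinite.toFinset with hF
  have hmemF : ∀ {p : ℤ}, p ∉ F → H p = ⊥ := by
    intro p hp
    by_contra h
    exact hp (hFinite.mem_toFinset.mpr h)
  have hof : ∀ (z : ∀ p : ℤ, H p) (q : ℤ),
      ((∑ p ∈ F, DirectSum.of (fun p => H p) p (z p)) q)
        = if q ∈ F then z q else 0 := by
    intro z q
    rw [DFinsupp.finset_sum_apply]
    by_cases hq : q ∈ F
    · rw [if_pos hq]
      have h1 : ∀ p ∈ F, p ≠ q → (DirectSum.of (fun p => H p) p (z p)) q = 0 :=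
        fun p _ hpq => DirectSum.of_eq_of_ne (β := fun p => H p) p q (z p) hpq.symm
      calc ∑ p ∈ F, (DirectSum.of (fun p => H p) p (z p)) q
          = (DirectSum.of (fun p => H p) q (z q)) q :=
            Finset.sum_eq_single_of_mem q hq h1
        _ = z q := DirectSum.of_eq_same (β := fun p => H p) q (z q)
    · rw [if_neg hq]
      exact Finset.sum_eq_zero fun p hp =>
        DirectSum.of_eq_of_ne (β := fun p => H p) p q (z p) (fun h => hq (h ▸ hp))
  have hcoe_sum : ∀ z : ∀ p : ℤ, H p,
      (DirectSum.coeLinearMap H) (∑ p ∈ F, DirectSum.of (fun p => H p) p (z p))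
        = ∑ p ∈ F, (z p : ℂ ⊗[ℝ] V) := by
    intro z
    rw [map_sum]
    simp
  have huniq : ∀ (x : ℂ ⊗[ℝ] V) (y : ℤ → ℂ ⊗[ℝ] V), (∀ p, y p ∈ H p) →
      (∀ p, p ∉ F → y p = 0) → (∑ p ∈ F, y p = x) → ∀ q : ℤ, π q x = y q := by
    intro x y hy hy0 hx q
    have hed : e (∑ p ∈ F, DirectSum.of (fun p => H p) p ⟨y p, hy p⟩) = x := by
      rw [he, hcoe_sum]
      exact hx
    have hsymm' : e.symm x = ∑ p ∈ F, DirectSum.of (fun p => H p) p ⟨y p, hy p⟩ := by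
      rw [← hed, LinearEquiv.symm_apply_apply]
    rw [hπ_def, hsymm', hof]
    by_cases hq : q ∈ F
    · rw [if_pos hq]
    · rw [if_neg hq, hy0 q hq]
      rfl
  have hsum : ∀ x : ℂ ⊗[ℝ] V, ∑ p ∈ F, π p x = x := by
    intro x
    have hd : (∑ p ∈ F, DirectSum.of (fun p => H p) p (e.symm x p)) = e.symm x := by
      refine DFinsupp.ext fun q => ?_
      rw [hof]
      by_cases hq : q ∈ F
      · rw [if_pos hq]
      · rw [if_neg hq]
        have h1 : (e.symm x q : ℂ ⊗[ℝ] V) ∈ (⊥ : Submodule ℂ (ℂ ⊗[ℝ] V)) :=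
          hmemF hq ▸ (e.symm x q).2
        exact (Subtype.ext ((Submodule.mem_bot ℂ).mp h1)).symm
    calc ∑ p ∈ F, π p x
        = ∑ p ∈ F, ((e.symm x p : ℂ ⊗[ℝ] V)) := Finset.sum_congr rfl fun p _ => hπ_def p x
      _ = (DirectSum.coeLinearMap H)
            (∑ p ∈ F, DirectSum.of (fun p => H p) p (e.symm x p)) := (hcoe_sum _).symm
      _ = e (e.symm x) := by rw [hd, he]
      _ = x := e.apply_symm_apply x
  have hπ0 : ∀ p : ℤ, p ∉ F → ∀ x : ℂ ⊗[ℝ] V, π p x = 0 := by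
    intro p hp x
    have h1 := hπ_mem p x
    rw [hmemF hp] at h1
    exact (Submodule.mem_bot ℂ).mp h1
  -- the Hodge form
  let σr : (ℂ ⊗[ℝ] V) →ₗ[ℝ] ℂ ⊗[ℝ] V :=
    TensorProduct.map Complex.conjAe.toLinearMap LinearMap.id
  have hσr : ∀ x : ℂ ⊗[ℝ] V, σr x = conjC V x := fun _ => rfl
  let ψcr : (ℂ ⊗[ℝ] V) →ₗ[ℝ] (ℂ ⊗[ℝ] V) →ₗ[ℝ] ℂ :=
    LinearMap.mk₂ ℝ (fun x y => ψc x y)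
      (fun x x' y => by simp)
      (fun a x y => by simp [LinearMap.map_smul_of_tower])
      (fun x y y' => by simp)
      (fun a x y => by simp [LinearMap.map_smul_of_tower])
  let L : ℤ → V →ₗ[ℝ] ℂ ⊗[ℝ] V := fun p => ((π p).restrictScalars ℝ) ∘ₗ iotaC V
  let T : ℤ → V →ₗ[ℝ] V →ₗ[ℝ] ℝ := fun p =>
    (ψcr.compl₁₂ (L p) (σr ∘ₗ L p)).compr₂
      (Complex.reLm ∘ₗ (LinearMap.mulLeft ℝ (Complex.I ^ (2 * p - k))))
  let Φ : V →ₗ[ℝ] V →ₗ[ℝ] ℝ := ∑ p ∈ F, T p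
  have hΦ : ∀ v w : V, Φ v w = ∑ p ∈ F,
      (Complex.I ^ (2 * p - k) *
        ψc (π p (iotaC V v)) (conjC V (π p (iotaC V w)))).re := by
    intro v w
    simp only [Φ, T, L, ψcr, σr, LinearMap.coe_sum, Finset.sum_apply,
      LinearMap.compr₂_apply, LinearMap.compl₁₂_apply, LinearMap.mk₂_apply,
      LinearMap.comp_apply, LinearMap.mulLeft_apply, Complex.reLm_coe,
      LinearMap.coe_restrictScalars]
    rfl
  -- positivity
  have hι_inj : ∀ v : V, v ≠ 0 → iotaC V v ≠ 0 := by
    intro v hv h0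
    let r : ℂ ⊗[ℝ] V →ₗ[ℝ] V :=
      TensorProduct.lift ((LinearMap.lsmul ℝ V) ∘ₗ Complex.reLm)
    have hr : r (iotaC V v) = v := by
      simp [r, iotaC_apply]
    rw [h0, map_zero] at hr
    exact hv hr.symm
  have hpos : ∀ v : V, v ≠ 0 → 0 < Φ v v := by
    intro v hv
    rw [hΦ]
    have hterm0 : ∀ p ∈ F, (0:ℝ) ≤
        (Complex.I ^ (2 * p - k) *
          ψc (π p (iotaC V v)) (conjC V (π p (iotaC V v)))).re := by
      intro p _
      by_cases h : π p (iotaC V v) = 0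
      · simp [h]
      · exact le_of_lt (hHR2 p _ (hπ_mem p _) h).1
    have hex : ∃ p ∈ F, π p (iotaC V v) ≠ 0 := by
      by_contra h
      push_neg at h
      exact hι_inj v hv (by rw [← hsum (iotaC V v)]; exact Finset.sum_eq_zero h)
    obtain ⟨p, hpF, hp⟩ := hex
    exact Finset.sum_pos' hterm0 ⟨p, hpF, (hHR2 p _ (hπ_mem p _) hp).1⟩
  -- invariance
  have hinv : ∀ g : V →L[ℝ] V, (∀ v w : V, ψ (g v) (g w) = ψ v w) →
      (∀ p : ℤ, (H p).map (LinearMap.baseChange ℂ (g : V →ₗ[ℝ] V)) ≤ H p) →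
      ∀ v w : V, Φ (g v) (g w) = Φ v w := by
    intro g hg hp v w
    have hcomm : ∀ (q : ℤ) (x : ℂ ⊗[ℝ] V),
        π q ((LinearMap.baseChange ℂ (g : V →ₗ[ℝ] V)) x)
          = (LinearMap.baseChange ℂ (g : V →ₗ[ℝ] V)) (π q x) := by
      intro q x
      refine huniq _ (fun p => (LinearMap.baseChange ℂ (g : V →ₗ[ℝ] V)) (π p x))
        (fun p => hp p ⟨π p x, hπ_mem p x, rfl⟩)
        (fun p hpF => by simp only [hπ0 p hpF, map_zero]) ?_ q
      rw [← map_sum, hsum]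
    rw [hΦ, hΦ]
    refine Finset.sum_congr rfl fun p _ => ?_
    have h1 : π p (iotaC V (g v))
        = (LinearMap.baseChange ℂ (g : V →ₗ[ℝ] V)) (π p (iotaC V v)) :=
      hcomm p (iotaC V v)
    have h2 : π p (iotaC V (g w))
        = (LinearMap.baseChange ℂ (g : V →ₗ[ℝ] V)) (π p (iotaC V w)) :=
      hcomm p (iotaC V w)
    rw [h1, h2, conjC_baseChange, psic_baseChange ψ ψc hExt _ hg]
  -- bijectivity is automatic
  have hbij : ∀ g : V →L[ℝ] V, (∀ v w : V, ψ (g v) (g w) = ψ v w) →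
      (∀ p : ℤ, (H p).map (LinearMap.baseChange ℂ (g : V →ₗ[ℝ] V)) ≤ H p) →
      Function.Bijective g := by
    intro g h1 h2
    have hinj : Function.Injective g := by
      intro a b hab
      by_contra hne
      have h0 : g (a - b) = 0 := by rw [map_sub, hab, sub_self]
      have hlt : (0:ℝ) < Φ (a - b) (a - b) := hpos _ (sub_ne_zero.mpr hne)
      rw [← hinv g h1 h2 (a - b) (a - b), h0] at hlt
      simp at hlt
    exact ⟨hinj, LinearMap.injective_iff_surjective.mp hinj⟩
  have hset : {g : V →L[ℝ] V | Function.Bijective g ∧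
      (∀ v w : V, ψ (g v) (g w) = ψ v w) ∧
      ∀ p : ℤ, (H p).map (LinearMap.baseChange ℂ (g : V →ₗ[ℝ] V)) ≤ H p}
      = {g : V →L[ℝ] V | (∀ v w : V, ψ (g v) (g w) = ψ v w) ∧
      ∀ p : ℤ, (H p).map (LinearMap.baseChange ℂ (g : V →ₗ[ℝ] V)) ≤ H p} := by
    ext g
    constructor
    · rintro ⟨_, h2, h3⟩; exact ⟨h2, h3⟩
    · rintro ⟨h2, h3⟩; exact ⟨hbij g h2 h3, h2, h3⟩
  rw [hset]
  haveI : FiniteDimensional ℝ (V →L[ℝ] V) := inferInstance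
  have hev : ∀ v : V, Continuous fun g : V →L[ℝ] V => g v := fun v =>
    (ContinuousLinearMap.apply ℝ V v).continuous
  -- closedness
  have hclosed : IsClosed {g : V →L[ℝ] V | (∀ v w : V, ψ (g v) (g w) = ψ v w) ∧
      ∀ p : ℤ, (H p).map (LinearMap.baseChange ℂ (g : V →ₗ[ℝ] V)) ≤ H p} := by
    rw [Set.setOf_and]
    have hA : IsClosed {g : V →L[ℝ] V | ∀ v w : V, ψ (g v) (g w) = ψ v w} := by
      rw [Set.setOf_forall]
      refine isClosed_iInter fun v => ?_
      rw [Set.setOf_forall]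
      refine isClosed_iInter fun w => ?_
      exact isClosed_eq (continuous_bilin ψ (hev v) (hev w)) continuous_const
    have hB : IsClosed {g : V →L[ℝ] V |
        ∀ p : ℤ, (H p).map (LinearMap.baseChange ℂ (g : V →ₗ[ℝ] V)) ≤ H p} := by
      rw [Set.setOf_forall]
      refine isClosed_iInter fun p => ?_
      have heq : {g : V →L[ℝ] V |
          (H p).map (LinearMap.baseChange ℂ (g : V →ₗ[ℝ] V)) ≤ H p}
          = ⋂ (x : H p), ⋂ (φ : Module.Dual ℝ (ℂ ⊗[ℝ] V))
              (_ : φ ∈ ((H p).restrictScalars ℝ).dualAnnihilator),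
              {g : V →L[ℝ] V |
                φ ((LinearMap.baseChange ℂ (g : V →ₗ[ℝ] V)) (x : ℂ ⊗[ℝ] V)) = 0} := by
        ext g
        simp only [Set.mem_setOf_eq, Set.mem_iInter, SetLike.le_def]
        constructor
        · intro h x φ hφ
          exact (Submodule.mem_dualAnnihilator φ).mp hφ _
            ((Submodule.restrictScalars_mem ℝ (H p) _).mpr
              (h (Submodule.mem_map_of_mem x.2)))
        · rintro h x ⟨y, hy, rfl⟩
          have h1 := (Subspace.forall_mem_dualAnnihilator_apply_eq_zero_iff
            ((H p).restrictScalars ℝ)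
            ((LinearMap.baseChange ℂ (g : V →ₗ[ℝ] V)) y)).mp
            (fun φ hφ => h ⟨y, hy⟩ φ hφ)
          exact (Submodule.restrictScalars_mem ℝ (H p) _).mp h1
      rw [heq]
      refine isClosed_iInter fun x => isClosed_iInter fun φ =>
        isClosed_iInter fun _ => ?_
      let Lf : (V →L[ℝ] V) →ₗ[ℝ] ℝ :=
        { toFun := fun g =>
            φ ((LinearMap.baseChange ℂ (g : V →ₗ[ℝ] V)) (x : ℂ ⊗[ℝ] V))
          map_add' := by
            intro a b
            simp only [ContinuousLinearMap.coe_add, LinearMap.baseChange_add,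
              LinearMap.add_apply, map_add]
          map_smul' := by
            intro c a
            simp only [ContinuousLinearMap.coe_smul, LinearMap.baseChange_smul,
              LinearMap.smul_apply, map_smul, RingHom.id_apply, smul_eq_mul] }
      have hLf : {g : V →L[ℝ] V |
          φ ((LinearMap.baseChange ℂ (g : V →ₗ[ℝ] V)) (x : ℂ ⊗[ℝ] V)) = 0}
          = Lf ⁻¹' {0} := rfl
      rw [hLf]
      exact isClosed_singleton.preimage Lf.continuous_of_finiteDimensional
    exact hA.inter hB
  -- boundedness
  haveI : ProperSpace V := FiniteDimensional.proper ℝ V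
  obtain ⟨v0, hv0, hmin⟩ := (isCompact_sphere (0:V) 1).exists_isMinOn
    (NormedSpace.sphere_nonempty.mpr zero_le_one)
    ((continuous_bilin Φ continuous_id continuous_id).continuousOn)
  have hv0n : ‖v0‖ = 1 := by simpa using hv0
  have hv0ne : v0 ≠ 0 := by
    intro h; rw [h, norm_zero] at hv0n; exact zero_ne_one hv0n
  set c : ℝ := Φ v0 v0 with hc
  have hcpos : 0 < c := hpos v0 hv0ne
  set C : ℝ := ‖bilinCLM Φ‖ with hC
  have hCle : ∀ v : V, Φ v v ≤ C * ‖v‖ ^ 2 := by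
    intro v
    have := bilin_le Φ v v
    calc Φ v v ≤ ‖bilinCLM Φ‖ * ‖v‖ * ‖v‖ := this
    _ = C * ‖v‖ ^ 2 := by rw [hC]; ring
  have hlow : ∀ v : V, c * ‖v‖ ^ 2 ≤ Φ v v := by
    intro v
    rcases eq_or_ne v 0 with rfl | hv
    · simp
    · have hn : ‖v‖ ≠ 0 := norm_ne_zero_iff.mpr hv
      set u : V := ‖v‖⁻¹ • v with hu
      have hun : u ∈ Metric.sphere (0:V) 1 := by
        simp [hu, norm_smul, abs_of_nonneg (inv_nonneg.mpr (norm_nonneg v)),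
          inv_mul_cancel₀ hn]
      have h1 : c ≤ Φ u u := hmin hun
      have h2 : Φ u u = (‖v‖ ^ 2)⁻¹ * Φ v v := by
        simp only [hu, map_smul, LinearMap.smul_apply, smul_eq_mul]
        rw [pow_two, mul_inv]
        ring
      rw [h2] at h1
      have h3 := mul_le_mul_of_nonneg_right h1 (sq_nonneg ‖v‖)
      calc c * ‖v‖ ^ 2 ≤ (‖v‖ ^ 2)⁻¹ * Φ v v * ‖v‖ ^ 2 := h3
      _ = Φ v v := by field_simp
  set R : ℝ := Real.sqrt (C / c) with hR
  have hbdd : Bornology.IsBounded {g : V →L[ℝ] V |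
      (∀ v w : V, ψ (g v) (g w) = ψ v w) ∧
      ∀ p : ℤ, (H p).map (LinearMap.baseChange ℂ (g : V →ₗ[ℝ] V)) ≤ H p} := by
    refine Metric.isBounded_closedBall (x := (0 : V →L[ℝ] V)) (r := R) |>.subset ?_
    rintro g ⟨h1, h2⟩
    rw [Metric.mem_closedBall, dist_zero_right]
    refine ContinuousLinearMap.opNorm_le_bound g (Real.sqrt_nonneg _) fun v => ?_
    have ha : c * ‖g v‖ ^ 2 ≤ C * ‖v‖ ^ 2 := by
      calc c * ‖g v‖ ^ 2 ≤ Φ (g v) (g v) := hlow (g v)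
      _ = Φ v v := hinv g h1 h2 v v
      _ ≤ C * ‖v‖ ^ 2 := hCle v
    have hb : ‖g v‖ ^ 2 ≤ (C / c) * ‖v‖ ^ 2 := by
      rw [div_mul_eq_mul_div, le_div_iff₀ hcpos]
      nlinarith
    calc ‖g v‖ = Real.sqrt (‖g v‖ ^ 2) := (Real.sqrt_sq (norm_nonneg _)).symm
    _ ≤ Real.sqrt ((C / c) * ‖v‖ ^ 2) := Real.sqrt_le_sqrt hb
    _ = R * ‖v‖ := by
        rw [Real.sqrt_mul (by positivity), Real.sqrt_sq (norm_nonneg _), hR]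
  exact Metric.isCompact_of_isClosed_isBounded hclosed hbdd
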